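/- For any positive integers m ≥ s ≥ t, there exists an (m,s,t)-covering design of size at most (binomial(m,t)/binomial(s,t)) · (1 + ln(binomial(s,t))); that is, C(m,s,t) ≤ (C(m,t)/C(s,t))·(1 + ln C(s,t)) where C(a,b) denotes the binomial coefficient. -/

import Mathlib

noncomputable def greedyF (x : ℝ) (u : ℕ) : ℝ :=
  if (u : ℝ) ≤ x then (u : ℝ) else x + x * Real.log (u / x)

lemma log_ge_one_sub_inv {z : ℝ} (hz : 0 < z) : 1 - 1/z ≤ Real.log z := by
  have h := Real.log_le_sub_one_of_pos (show (0:ℝ) < 1/z by positivity)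
  rw [Real.log_div one_ne_zero (ne_of_gt hz), Real.log_one] at h
  linarith

lemma greedyF_step {x : ℝ} (hx : 1 ≤ x) (j : ℕ) :
    min 1 (x / (j+1 : ℕ)) ≤ greedyF x (j+1) - greedyF x j := by
  have hj1 : (0:ℝ) < (j+1 : ℕ) := by positivity
  unfold greedyF
  push_cast
  by_cases h1 : ((j:ℝ) + 1) ≤ x
  · have h0 : (j:ℝ) ≤ x := by linarith
    rw [if_pos h1, if_pos h0]
    have : min 1 (x / ((j:ℝ)+1)) ≤ 1 := min_le_left _ _
    push_cast
    linarith
  · push_neg at h1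
    have hxj1 : x / ((j:ℝ)+1) < 1 := (div_lt_one (by push_cast at hj1 ⊢; linarith)).2 h1
    have hmin : min 1 (x / ((j:ℝ)+1)) = x / ((j:ℝ)+1) := min_eq_right hxj1.le
    rw [if_neg (by push_cast; linarith)]
    by_cases h0 : (j:ℝ) ≤ x
    · rw [if_pos h0]
      have hlog : 1 - x/((j:ℝ)+1) ≤ Real.log (((j:ℝ)+1)/x) := by
        have := log_ge_one_sub_inv (z := ((j:ℝ)+1)/x) (by positivity)
        rwa [one_div_div] at this
      push_cast
      rw [hmin]
      have hxpos : (0:ℝ) < x := by linarith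
      have hd : 0 < (j:ℝ) + 1 - x := by linarith
      have hd1 : (j:ℝ) + 1 - x ≤ 1 := by linarith
      have hjj : (0:ℝ) < (j:ℝ)+1 := by linarith
      have key : 0 ≤ 2*x - x^2/((j:ℝ)+1) - j - x/((j:ℝ)+1) := by
        have heq : 2*x - x^2/((j:ℝ)+1) - j - x/((j:ℝ)+1)
            = (((j:ℝ)+1-x) - ((j:ℝ)+1-x)^2)/((j:ℝ)+1) := by
          field_simp
          ring
        rw [heq]
        apply div_nonneg _ hjj.le
        nlinarith
      have h3 : x*(1 - x/((j:ℝ)+1)) = x - x^2/((j:ℝ)+1) := by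
        field_simp
      have h4 := mul_le_mul_of_nonneg_left hlog hxpos.le
      linarith [h4, h3.symm.le]
    · push_neg at h0
      rw [if_neg h0.not_ge, hmin]
      have hxpos : (0:ℝ) < x := by linarith
      have hjpos : (0:ℝ) < (j:ℝ) := lt_trans hxpos h0
      have hlog : 1 - (j:ℝ)/((j:ℝ)+1) ≤ Real.log (((j:ℝ)+1)/(j:ℝ)) := by
        have := log_ge_one_sub_inv (z := ((j:ℝ)+1)/(j:ℝ)) (by positivity)
        rwa [one_div_div] at this
      have hrw : Real.log (((j:ℝ)+1)/x) - Real.log ((j:ℝ)/x) = Real.log (((j:ℝ)+1)/(j:ℝ)) := by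
        rw [Real.log_div (by linarith) (by linarith), Real.log_div (by linarith) (by linarith),
          Real.log_div (by linarith) (by linarith)]
        ring
      have h2 : 1 - (j:ℝ)/((j:ℝ)+1) = 1/((j:ℝ)+1) := by
        field_simp
        ring
      have : x * (1/((j:ℝ)+1)) ≤ x * Real.log (((j:ℝ)+1)/(j:ℝ)) := by
        apply mul_le_mul_of_nonneg_left _ hxpos.le
        rw [← h2]; exact hlog
      push_cast
      calc x / ((j:ℝ)+1) = x * (1/((j:ℝ)+1)) := by ring
        _ ≤ x * Real.log (((j:ℝ)+1)/(j:ℝ)) := this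
        _ = (x + x * Real.log (((j:ℝ)+1)/x)) - (x + x * Real.log ((j:ℝ)/x)) := by
            rw [← hrw]; ring

lemma greedyF_sum_step {x : ℝ} (hx : 1 ≤ x) :
    ∀ c u : ℕ, c ≤ u → (c:ℝ) * min 1 (x/(u:ℝ)) ≤ greedyF x u - greedyF x (u - c) := by
  intro c
  induction c with
  | zero => intro u _; simp
  | succ c ih =>
    intro u hcu
    have hc1u : c ≤ u := by omega
    have huc : 1 ≤ u - c := by omega
    have h1 := ih u hc1u
    obtain ⟨j, hj⟩ : ∃ j, u - c = j + 1 := ⟨u - c - 1, by omega⟩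
    have hstep := greedyF_step hx j
    rw [← hj] at hstep
    have hjc : u - (c+1) = j := by omega
    rw [hjc]
    have hmono : min 1 (x/(u:ℝ)) ≤ min 1 (x/((u - c : ℕ):ℝ)) := by
      apply min_le_min le_rfl
      apply div_le_div_of_nonneg_left (by linarith) (by exact_mod_cast huc) ?_
      exact_mod_cast Nat.sub_le u c
    push_cast
    nlinarith [hmono, hstep, h1]

lemma greedyF_chain {x : ℝ} (hx : 1 ≤ x) {c u : ℕ} (hc : 1 ≤ c) (hcu : c ≤ u)
    (h : (u:ℝ) ≤ (c:ℝ) * x) : 1 + greedyF x (u - c) ≤ greedyF x u := by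
  have hs := greedyF_sum_step hx c u hcu
  have hu1 : 1 ≤ u := le_trans hc hcu
  have hupos : (0:ℝ) < (u:ℝ) := by exact_mod_cast hu1
  have hgoal : (1:ℝ) ≤ (c:ℝ) * min 1 (x/(u:ℝ)) := by
    rcases le_total 1 (x/(u:ℝ)) with h' | h'
    · rw [min_eq_left h']
      simpa using (by exact_mod_cast hc : (1:ℝ) ≤ (c:ℝ))
    · rw [min_eq_right h']
      rw [mul_div_assoc']
      rw [le_div_iff₀ hupos, one_mul]
      exact h
  linarith

open Finset in
lemma card_supersets {m s t : ℕ} (hts : t ≤ s) (hsm : s ≤ m) {T : Finset ℕ}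
    (hT : T ⊆ Finset.range m) (hTc : T.card = t) :
    (((Finset.range m).powersetCard s).filter (fun A => T ⊆ A)).card
      = (m - t).choose (s - t) := by
  have hcard : (Finset.range m \ T).card = m - t := by
    rw [card_sdiff_of_subset hT, card_range, hTc]
  rw [← hcard, ← Finset.card_powersetCard]
  apply Finset.card_bij' (i := fun A _ => A \ T) (j := fun B _ => B ∪ T)
  · intro A hA
    simp only [mem_filter, Finset.mem_powersetCard] at hA
    obtain ⟨⟨hAr, hAc⟩, hTA⟩ := hA
    rw [Finset.mem_powersetCard]
    constructor
    · exact sdiff_subset_sdiff hAr le_rfl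
    · rw [card_sdiff_of_subset hTA, hAc, hTc]
  · intro B hB
    rw [Finset.mem_powersetCard] at hB
    obtain ⟨hBr, hBc⟩ := hB
    have hdisj : Disjoint B T := disjoint_of_subset_left hBr sdiff_disjoint
    simp only [mem_filter, Finset.mem_powersetCard]
    refine ⟨⟨?_, ?_⟩, subset_union_right⟩
    · exact union_subset (hBr.trans sdiff_subset) hT
    · rw [card_union_of_disjoint hdisj, hBc, hTc]
      omega
  · intro A hA
    simp only [mem_filter, Finset.mem_powersetCard] at hA
    exact sdiff_union_of_subset hA.2
  · intro B hB
    rw [Finset.mem_powersetCard] at hB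
    have hdisj : Disjoint B T := disjoint_of_subset_left hB.1 sdiff_disjoint
    exact union_sdiff_cancel_right hdisj

open Finset in
lemma sum_count {m s t : ℕ} (hts : t ≤ s) (hsm : s ≤ m) (𝒯 : Finset (Finset ℕ))
    (h𝒯 : ∀ T ∈ 𝒯, T ⊆ Finset.range m ∧ T.card = t) :
    ∑ A ∈ (Finset.range m).powersetCard s, (𝒯.filter (fun T => T ⊆ A)).card
      = 𝒯.card * (m - t).choose (s - t) := by
  calc ∑ A ∈ (Finset.range m).powersetCard s, (𝒯.filter (fun T => T ⊆ A)).card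
      = ∑ A ∈ (Finset.range m).powersetCard s, ∑ T ∈ 𝒯, if T ⊆ A then 1 else 0 := by
        simp only [Finset.card_filter]
    _ = ∑ T ∈ 𝒯, ∑ A ∈ (Finset.range m).powersetCard s, if T ⊆ A then 1 else 0 :=
        Finset.sum_comm
    _ = ∑ T ∈ 𝒯, (((Finset.range m).powersetCard s).filter (fun A => T ⊆ A)).card := by
        simp only [Finset.card_filter]
    _ = ∑ T ∈ 𝒯, (m - t).choose (s - t) := by
        apply Finset.sum_congr rfl
        intro T hT
        exact card_supersets hts hsm (h𝒯 T hT).1 (h𝒯 T hT).2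
    _ = 𝒯.card * (m - t).choose (s - t) := by
        rw [Finset.sum_const, smul_eq_mul]

open Finset in
lemma greedy_step {m s t : ℕ} (hts : t ≤ s) (hsm : s ≤ m)
    {𝒯 : Finset (Finset ℕ)} (h𝒯 : ∀ T ∈ 𝒯, T ⊆ Finset.range m ∧ T.card = t) :
    ∃ A, A ⊆ Finset.range m ∧ A.card = s ∧
      𝒯.card * s.choose t ≤ (𝒯.filter (fun T => T ⊆ A)).card * m.choose t := by
  set 𝒜 := (Finset.range m).powersetCard s with h𝒜
  have h𝒜card : 𝒜.card = m.choose s := by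
    rw [h𝒜, Finset.card_powersetCard, card_range]
  have h𝒜ne : 𝒜.Nonempty := by
    rw [← Finset.card_pos, h𝒜card]
    exact Nat.choose_pos hsm
  have hsum := sum_count hts hsm 𝒯 h𝒯
  -- averaging
  have havg : ∃ A ∈ 𝒜, 𝒯.card * (m - t).choose (s - t) ≤
      (𝒯.filter (fun T => T ⊆ A)).card * m.choose s := by
    by_contra hcon
    push_neg at hcon
    have hlt : ∑ A ∈ 𝒜, (𝒯.filter (fun T => T ⊆ A)).card * m.choose s <
        ∑ _A ∈ 𝒜, 𝒯.card * (m - t).choose (s - t) :=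
      Finset.sum_lt_sum_of_nonempty h𝒜ne (fun A hA => hcon A hA)
    rw [← Finset.sum_mul, hsum, Finset.sum_const, smul_eq_mul, h𝒜card] at hlt
    rw [mul_comm (m.choose s)] at hlt
    exact lt_irrefl _ (by linarith [hlt] : 𝒯.card * (m - t).choose (s - t) * m.choose s <
      𝒯.card * (m - t).choose (s - t) * m.choose s)
  obtain ⟨A, hA, hineq⟩ := havg
  rw [h𝒜, Finset.mem_powersetCard] at hA
  refine ⟨A, hA.1, hA.2, ?_⟩
  have hid : m.choose s * s.choose t = m.choose t * (m - t).choose (s - t) :=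
    Nat.choose_mul hts
  have hcms : 0 < (m - t).choose (s - t) := Nat.choose_pos (by omega)
  have hbig : 𝒯.card * s.choose t * (m - t).choose (s - t) ≤
      (𝒯.filter (fun T => T ⊆ A)).card * m.choose t * (m - t).choose (s - t) := by
    calc 𝒯.card * s.choose t * (m - t).choose (s - t)
        = (𝒯.card * (m - t).choose (s - t)) * s.choose t := by ring
      _ ≤ ((𝒯.filter (fun T => T ⊆ A)).card * m.choose s) * s.choose t :=
          Nat.mul_le_mul_right _ hineq
      _ = (𝒯.filter (fun T => T ⊆ A)).card * (m.choose s * s.choose t) := by ring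
      _ = (𝒯.filter (fun T => T ⊆ A)).card * m.choose t * (m - t).choose (s - t) := by
          rw [hid]; ring
  exact Nat.le_of_mul_le_mul_right hbig hcms

open Finset in
lemma greedy_cover {m s t : ℕ} (hts : t ≤ s) (hsm : s ≤ m) :
    ∀ n (𝒯 : Finset (Finset ℕ)), 𝒯.card = n →
      (∀ T ∈ 𝒯, T ⊆ Finset.range m ∧ T.card = t) →
      ∃ D : Finset (Finset ℕ), (∀ A ∈ D, A ⊆ Finset.range m ∧ A.card = s) ∧
        (∀ T ∈ 𝒯, ∃ A ∈ D, T ⊆ A) ∧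
        (D.card : ℝ) ≤ greedyF ((m.choose t : ℝ)/(s.choose t : ℝ)) n := by
  have hS1 : 0 < s.choose t := Nat.choose_pos hts
  have hM1 : 0 < m.choose t := Nat.choose_pos (hts.trans hsm)
  have hSM : s.choose t ≤ m.choose t := Nat.choose_le_choose t hsm
  have hSpos : (0:ℝ) < (s.choose t : ℝ) := by exact_mod_cast hS1
  set x : ℝ := (m.choose t : ℝ)/(s.choose t : ℝ) with hxdef
  have hx1 : 1 ≤ x := by
    rw [hxdef, le_div_iff₀ hSpos, one_mul]
    exact_mod_cast hSM
  intro n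
  induction n using Nat.strong_induction_on with
  | _ n ih =>
    intro 𝒯 hcard h𝒯
    rcases Nat.eq_zero_or_pos n with hn | hn
    · subst hn
      refine ⟨∅, by simp, ?_, ?_⟩
      · rw [Finset.card_eq_zero] at hcard
        simp [hcard]
      · simp only [Finset.card_empty, Nat.cast_zero]
        unfold greedyF
        rw [if_pos (by simpa using hx1.trans' zero_le_one)]
        simp
    · have hne : 𝒯.Nonempty := by rw [← Finset.card_pos, hcard]; exact hn
      obtain ⟨A, hAr, hAc, hineq⟩ := greedy_step hts hsm h𝒯
      set c := (𝒯.filter (fun T => T ⊆ A)).card with hc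
      have hcn : c ≤ n := by rw [← hcard]; exact Finset.card_filter_le _ _
      have hc1 : 1 ≤ c := by
        rcases Nat.eq_zero_or_pos c with h0 | h0
        · exfalso
          rw [hcard, h0, zero_mul] at hineq
          have : 0 < n * s.choose t := Nat.mul_pos hn hS1
          omega
        · exact h0
      set 𝒯' := 𝒯.filter (fun T => ¬ T ⊆ A) with h𝒯'
      have hsplit : c + 𝒯'.card = n := by
        rw [← hcard, hc, h𝒯']
        exact Finset.card_filter_add_card_filter_not _
      obtain ⟨D', hD'1, hD'2, hD'3⟩ := ih (n - c) (by omega) 𝒯' (by omega)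
        (fun T hT => h𝒯 T (Finset.mem_filter.1 hT).1)
      refine ⟨insert A D', ?_, ?_, ?_⟩
      · intro B hB
        rcases Finset.mem_insert.1 hB with rfl | hB'
        · exact ⟨hAr, hAc⟩
        · exact hD'1 B hB'
      · intro T hT
        by_cases hTA : T ⊆ A
        · exact ⟨A, Finset.mem_insert_self _ _, hTA⟩
        · obtain ⟨A', hA', hTA'⟩ := hD'2 T (Finset.mem_filter.2 ⟨hT, hTA⟩)
          exact ⟨A', Finset.mem_insert_of_mem hA', hTA'⟩
      · have hcx : (n:ℝ) ≤ (c:ℝ) * x := by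
          rw [hxdef, mul_div_assoc', le_div_iff₀ hSpos]
          rw [hcard] at hineq
          exact_mod_cast hineq
        have hchain := greedyF_chain hx1 hc1 hcn hcx
        have hcardle : ((insert A D').card : ℝ) ≤ (D'.card : ℝ) + 1 := by
          exact_mod_cast Finset.card_insert_le A D'
        linarith

def IsCoveringDesign (m s t : ℕ) (D : Finset (Finset ℕ)) : Prop :=
  (∀ S ∈ D, S ⊆ Finset.range m ∧ S.card = s) ∧
  ∀ T ⊆ Finset.range m, T.card ≤ t → ∃ S ∈ D, T ⊆ S

noncomputable def coverNum (m s t : ℕ) : ℕ :=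
  sInf {r | ∃ D : Finset (Finset ℕ), IsCoveringDesign m s t D ∧ D.card = r}

theorem stmt3 (m s t : ℕ) (ht : 0 < t) (hts : t ≤ s) (hsm : s ≤ m) :
    (coverNum m s t : ℝ) ≤
      ((Nat.choose m t : ℝ) / (Nat.choose s t : ℝ)) * (1 + Real.log (Nat.choose s t)) := by
  have htm : t ≤ m := hts.trans hsm
  have hS1 : 0 < s.choose t := Nat.choose_pos hts
  have hM1 : 0 < m.choose t := Nat.choose_pos htm
  have hSpos : (0:ℝ) < (s.choose t : ℝ) := by exact_mod_cast hS1
  have hMpos : (0:ℝ) < (m.choose t : ℝ) := by exact_mod_cast hM1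
  set x : ℝ := (m.choose t : ℝ)/(s.choose t : ℝ) with hxdef
  have hxpos : 0 < x := by positivity
  have hlogS : 0 ≤ Real.log (s.choose t : ℝ) :=
    Real.log_nonneg (by exact_mod_cast hS1)
  set 𝒯 : Finset (Finset ℕ) := (Finset.range m).powersetCard t with h𝒯def
  have h𝒯card : 𝒯.card = m.choose t := by
    rw [h𝒯def, Finset.card_powersetCard, Finset.card_range]
  have h𝒯 : ∀ T ∈ 𝒯, T ⊆ Finset.range m ∧ T.card = t := by
    intro T hT
    exact Finset.mem_powersetCard.1 hT
  obtain ⟨D, hD1, hD2, hD3⟩ := greedy_cover hts hsm (m.choose t) 𝒯 h𝒯card h𝒯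
  have hcov : IsCoveringDesign m s t D := by
    refine ⟨hD1, ?_⟩
    intro T hTr hTc
    obtain ⟨T', hTT', hT'r, hT'c⟩ := Finset.exists_subsuperset_card_eq hTr hTc
      (by rw [Finset.card_range]; exact htm)
    obtain ⟨A, hAD, hTA⟩ := hD2 T' (Finset.mem_powersetCard.2 ⟨hT'r, hT'c⟩)
    exact ⟨A, hAD, hTT'.trans hTA⟩
  have hcn : coverNum m s t ≤ D.card := Nat.sInf_le ⟨D, hcov, rfl⟩
  have h1 : (coverNum m s t : ℝ) ≤ (D.card : ℝ) := by exact_mod_cast hcn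
  refine h1.trans (hD3.trans ?_)
  unfold greedyF
  by_cases hMx : ((m.choose t : ℕ) : ℝ) ≤ x
  · rw [if_pos hMx]
    calc ((m.choose t : ℕ) : ℝ) ≤ x := hMx
      _ = x * 1 := (mul_one x).symm
      _ ≤ x * (1 + Real.log (s.choose t : ℝ)) := by
          apply mul_le_mul_of_nonneg_left _ hxpos.le
          linarith
  · rw [if_neg hMx]
    have hdiv : ((m.choose t : ℕ) : ℝ) / x = (s.choose t : ℝ) := by
      rw [hxdef]
      field_simp
    rw [hdiv]
    ring_nf
    exact le_of_eq (by rw [hxdef]; ring)
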